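/- Let Π : ℝ^m → M_m(ℝ) be a C¹ matrix-valued map that is skew-symmetric at every point and satisfies the Jacobi identity in coordinates: Σ_{l=1}^m (Π^{il}(z) ∂Π^{jk}/∂z^l (z) + Π^{kl}(z) ∂Π^{ij}/∂z^l (z) + Π^{jl}(z) ∂Π^{ki}/∂z^l (z)) = 0 for all i, j, k and all z. Let H : ℝ^m → ℝ be C², and let Φ : ℝ × ℝ^m → ℝ^m be a C² map with Φ(0, z) = z and ∂Φ/∂t (t, z) = Π(Φ(t, z)) ∇H(Φ(t, z)) for all (t, z). Then the flow preserves the Poisson structure: for all t and z, D_zΦ(t, z) Π(z) D_zΦ(t, z)ᵀ = Π(Φ(t, z)). -/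

import Mathlib

open Matrix

/-- The Euclidean gradient of `H : ℝ^m → ℝ` at `z`. -/
noncomputable def grad {m : ℕ} (H : (Fin m → ℝ) → ℝ) (z : Fin m → ℝ) : Fin m → ℝ :=
  fun i => fderiv ℝ H z (Pi.single i 1)

/-- The partial derivative in the `l`-th coordinate direction of `F : ℝ^m → ℝ`. -/
noncomputable def pd {m : ℕ} (l : Fin m) (F : (Fin m → ℝ) → ℝ) (z : Fin m → ℝ) : ℝ :=
  fderiv ℝ F z (Pi.single l 1)

/-- The `m × m` Jacobian matrix of `ψ : ℝ^m → ℝ^m` at `z`. -/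
noncomputable def jacobian {m : ℕ} (ψ : (Fin m → ℝ) → (Fin m → ℝ)) (z : Fin m → ℝ) :
    Matrix (Fin m) (Fin m) ℝ :=
  Matrix.of fun i j => fderiv ℝ ψ z (Pi.single j 1) i


lemma fderiv_eq_sum_pd {m : ℕ} (g : (Fin m → ℝ) → ℝ) (w v : Fin m → ℝ) :
    fderiv ℝ g w v = ∑ l, v l * pd l g w := by
  have hv : v = ∑ l, v l • (Pi.single l 1 : Fin m → ℝ) := by
    ext j
    simp [Pi.single_apply, Finset.sum_apply]
  conv_lhs => rw [hv]
  rw [map_sum]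
  simp [pd, smul_eq_mul]

lemma hasDerivAt_comp_sum_pd {m : ℕ} {g : (Fin m → ℝ) → ℝ} (hg : ContDiff ℝ 1 g)
    {φ : ℝ → Fin m → ℝ} {φ' : Fin m → ℝ} {s : ℝ} (hφ : HasDerivAt φ φ' s) :
    HasDerivAt (fun τ => g (φ τ)) (∑ l, φ' l * pd l g (φ s)) s := by
  have h := (hg.differentiable one_ne_zero (φ s)).hasFDerivAt.comp_hasDerivAt s hφ
  rw [← fderiv_eq_sum_pd]
  exact h

section AuxPoisson
variable {m : ℕ}
  (P : (Fin m → ℝ) → Matrix (Fin m) (Fin m) ℝ)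
  (hPC1 : ∀ i j, ContDiff ℝ 1 fun z => P z i j)
  (hskew : ∀ z, (P z)ᵀ = -(P z))
  (hjacobi : ∀ (i j k : Fin m) (z : Fin m → ℝ),
      ∑ l : Fin m, (P z i l * pd l (fun w => P w j k) z
        + P z k l * pd l (fun w => P w i j) z
        + P z j l * pd l (fun w => P w k i) z) = 0)
  (H : (Fin m → ℝ) → ℝ) (hH : ContDiff ℝ 2 H)

-- entry skew
include hskew in
lemma skew_entry (w : Fin m → ℝ) (a b : Fin m) : P w b a = - P w a b := by
  have := congrFun (congrFun (hskew w) a) b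
  simpa [Matrix.transpose_apply] using this

-- pd skew
include hskew in
lemma pd_skew (w : Fin m → ℝ) (l a b : Fin m) :
    pd l (fun u => P u b a) w = - pd l (fun u => P u a b) w := by
  have hfun : (fun u => P u b a) = fun u => -(P u a b) := by
    funext u; exact skew_entry P hskew u a b
  rw [pd, hfun, fderiv_fun_neg]
  simp [pd]

-- Hessian symmetry
include hH in
lemma hess_symm (w : Fin m → ℝ) (k r : Fin m) :
    pd k (fun u => grad H u r) w = pd r (fun u => grad H u k) w := by
  have hHd : ContDiff ℝ 1 (fderiv ℝ H) := hH.fderiv_right (by norm_num)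
  have key : ∀ a b : Fin m, pd a (fun u => grad H u b) w
      = fderiv ℝ (fderiv ℝ H) w (Pi.single a 1) (Pi.single b 1) := by
    intro a b
    have hclm : HasFDerivAt (fun u => fderiv ℝ H u (Pi.single b 1))
        ((fderiv ℝ H w).comp (0 : (Fin m → ℝ) →L[ℝ] (Fin m → ℝ))
          + (fderiv ℝ (fderiv ℝ H) w).flip (Pi.single b 1)) w :=
      ((hHd.differentiable one_ne_zero w).hasFDerivAt).clm_apply (hasFDerivAt_const _ w)
    have : pd a (fun u => grad H u b) w = pd a (fun u => fderiv ℝ H u (Pi.single b 1)) w := rfl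
    rw [this, pd, hclm.fderiv]
    simp
  rw [key k r, key r k]
  exact (hH.contDiffAt.isSymmSndFDerivAt (by simp)) _ _

-- product rule for the Jacobian entries of f = P ∇H
include hPC1 in
lemma Jf_expand (hgradC : ∀ i, ContDiff ℝ 1 fun w => grad H w i) (w : Fin m → ℝ) (i k : Fin m) :
    pd k (fun u => (P u *ᵥ grad H u) i) w
      = ∑ r, (pd k (fun u => P u i r) w * grad H w r
          + P w i r * pd k (fun u => grad H u r) w) := by
  have hfun : (fun u => (P u *ᵥ grad H u) i) = fun u => ∑ r, P u i r * grad H u r := by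
    funext u; simp [Matrix.mulVec, dotProduct]
  have hsum : HasFDerivAt (fun u => ∑ r : Fin m, P u i r * grad H u r)
      (∑ r : Fin m, (P w i r • fderiv ℝ (fun u => grad H u r) w
        + grad H w r • fderiv ℝ (fun u => P u i r) w)) w :=
    HasFDerivAt.fun_sum fun r _ =>
      (((hPC1 i r).differentiable one_ne_zero w).hasFDerivAt).mul
        (((hgradC r).differentiable one_ne_zero w).hasFDerivAt)
  rw [pd, hfun, hsum.fderiv]
  simp only [ContinuousLinearMap.coe_sum', Finset.sum_apply, ContinuousLinearMap.add_apply,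
    ContinuousLinearMap.coe_smul', Pi.smul_apply, smul_eq_mul]
  exact Finset.sum_congr rfl fun r _ => by rw [pd, pd]; ring

include hPC1 hskew hjacobi hH in
lemma key_alg (hgradC : ∀ i, ContDiff ℝ 1 fun w => grad H w i) (w : Fin m → ℝ) (i j : Fin m) :
    ∑ l, (P w *ᵥ grad H w) l * pd l (fun u => P u i j) w
      = (∑ k, pd k (fun u => (P u *ᵥ grad H u) i) w * P w k j)
        + ∑ k, P w i k * pd k (fun u => (P u *ᵥ grad H u) j) w := by
  classical
  have hmerge : ∀ (A B : Fin m → Fin m → ℝ),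
      ((∑ k, ∑ r, A k r) - ∑ k, ∑ r, B k r) = ∑ k, ∑ r, (A k r - B k r) := by
    intro A B
    rw [← Finset.sum_sub_distrib]
    exact Finset.sum_congr rfl fun k _ => by rw [Finset.sum_sub_distrib]
  have hadd : ∀ (A B : Fin m → Fin m → ℝ),
      (∑ k, ∑ r, (A k r + B k r)) = (∑ k, ∑ r, A k r) + ∑ k, ∑ r, B k r := by
    intro A B
    rw [← Finset.sum_add_distrib]
    exact Finset.sum_congr rfl fun k _ => Finset.sum_add_distrib
  -- Left side as a double sum
  have hL : ∑ l, (P w *ᵥ grad H w) l * pd l (fun u => P u i j) w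
      = ∑ k, ∑ r, P w k r * grad H w r * pd k (fun u => P u i j) w := by
    refine Finset.sum_congr rfl fun k _ => ?_
    have : (P w *ᵥ grad H w) k = ∑ r, P w k r * grad H w r := by
      simp [Matrix.mulVec, dotProduct]
    rw [this, Finset.sum_mul]
  -- Right side as a double sum
  have hR : (∑ k, pd k (fun u => (P u *ᵥ grad H u) i) w * P w k j)
        + (∑ k, P w i k * pd k (fun u => (P u *ᵥ grad H u) j) w)
      = ∑ k, ∑ r, ((pd k (fun u => P u i r) w * grad H w r
              + P w i r * pd k (fun u => grad H u r) w) * P w k j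
          + P w i k * (pd k (fun u => P u j r) w * grad H w r
              + P w j r * pd k (fun u => grad H u r) w)) := by
    rw [← Finset.sum_add_distrib]
    refine Finset.sum_congr rfl fun k _ => ?_
    rw [Jf_expand P hPC1 H hgradC w i k, Jf_expand P hPC1 H hgradC w j k,
      Finset.sum_mul, Finset.mul_sum, ← Finset.sum_add_distrib]
  rw [hL, hR, eq_comm, ← sub_eq_zero, hmerge]
  have hsplit : ∀ k r : Fin m,
      ((pd k (fun u => P u i r) w * grad H w r
              + P w i r * pd k (fun u => grad H u r) w) * P w k j
          + P w i k * (pd k (fun u => P u j r) w * grad H w r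
              + P w j r * pd k (fun u => grad H u r) w))
        - P w k r * grad H w r * pd k (fun u => P u i j) w
      = ((pd k (fun u => P u i r) w * P w k j + P w i k * pd k (fun u => P u j r) w
          - P w k r * pd k (fun u => P u i j) w) * grad H w r)
        + (P w i r * pd k (fun u => grad H u r) w * P w k j
          + P w i k * P w j r * pd k (fun u => grad H u r) w) := by
    intro k r; ring
  simp_rw [hsplit]
  rw [hadd]
  have hfirst : (∑ k, ∑ r : Fin m,
      (pd k (fun u => P u i r) w * P w k j + P w i k * pd k (fun u => P u j r) w
          - P w k r * pd k (fun u => P u i j) w) * grad H w r) = 0 := by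
    rw [Finset.sum_comm]
    refine Finset.sum_eq_zero fun r _ => ?_
    rw [← Finset.sum_mul]
    have hjid : (∑ k, (pd k (fun u => P u i r) w * P w k j
        + P w i k * pd k (fun u => P u j r) w
        - P w k r * pd k (fun u => P u i j) w)) = 0 := by
      rw [← hjacobi i j r w]
      refine Finset.sum_congr rfl fun k _ => ?_
      rw [pd_skew P hskew w k r i, skew_entry P hskew w j k, skew_entry P hskew w r k]
      ring
    rw [hjid, zero_mul]
  have hsecond : (∑ k, ∑ r : Fin m,
      (P w i r * pd k (fun u => grad H u r) w * P w k j
        + P w i k * P w j r * pd k (fun u => grad H u r) w)) = 0 := by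
    rw [hadd]
    have h2 : (∑ k, ∑ r : Fin m, P w i k * P w j r * pd k (fun u => grad H u r) w)
        = ∑ k, ∑ r : Fin m, P w i r * P w j k * pd r (fun u => grad H u k) w :=
      Finset.sum_comm
    rw [h2, ← Finset.sum_add_distrib]
    refine Finset.sum_eq_zero fun k _ => ?_
    rw [← Finset.sum_add_distrib]
    refine Finset.sum_eq_zero fun r _ => ?_
    rw [hess_symm H hH w r k, skew_entry P hskew w j k]
    ring
  rw [hfirst, hsecond, add_zero]
end AuxPoisson


lemma ode_matrix_zero {m : ℕ} (J : ℝ → Fin m → Fin m → ℝ)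
    (hJ : ∀ i k, Continuous fun s => J s i k)
    (A : ℝ → Fin m → Fin m → ℝ)
    (hA' : ∀ s, HasDerivAt A (fun i j => ∑ k, (J s i k * A s k j + A s i k * J s j k)) s)
    (hA0 : A 0 = 0) (t : ℝ) : A t = 0 := by
  classical
  rcases Nat.eq_zero_or_pos m with hm | hm
  · funext i; exact absurd i.isLt (by omega)
  set c : ℝ := |t| + 1 with hc
  have hc0 : 0 < c := by positivity
  have htmem : t ∈ Set.Ioo (-c) c := by
    constructor <;> [nlinarith [abs_nonneg t, neg_abs_le t]; nlinarith [le_abs_self t]]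
  have h0mem : (0 : ℝ) ∈ Set.Ioo (-c) c := by constructor <;> nlinarith
  -- bound on the coefficients over the compact interval
  have hgcont : Continuous fun s => ∑ i : Fin m, ∑ k : Fin m, |J s i k| := by
    exact continuous_finset_sum _ fun i _ => continuous_finset_sum _ fun k _ => (hJ i k).abs
  obtain ⟨C, hC⟩ := (isCompact_Icc (a := -c) (b := c)).exists_bound_of_continuousOn
    hgcont.continuousOn
  have hentry : ∀ s ∈ Set.Icc (-c) c, ∀ i k, |J s i k| ≤ C := by
    intro s hs i k
    have h1 : |J s i k| ≤ ∑ i' : Fin m, ∑ k' : Fin m, |J s i' k'| := by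
      calc |J s i k| ≤ ∑ k' : Fin m, |J s i k'| :=
            Finset.single_le_sum (f := fun k' => |J s i k'|) (fun k' _ => abs_nonneg _) (Finset.mem_univ k)
        _ ≤ ∑ i' : Fin m, ∑ k' : Fin m, |J s i' k'| :=
            Finset.single_le_sum (f := fun i' => ∑ k' : Fin m, |J s i' k'|)
              (fun i' _ => Finset.sum_nonneg fun k' _ => abs_nonneg _) (Finset.mem_univ i)
    have h2 := hC s hs
    rw [Real.norm_eq_abs, abs_of_nonneg
      (Finset.sum_nonneg fun i' _ => Finset.sum_nonneg fun k' _ => abs_nonneg _)] at h2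
    linarith
  have hC0 : 0 ≤ C := by
    have := hentry 0 ⟨by linarith, by linarith⟩ ⟨0, hm⟩ ⟨0, hm⟩
    have := abs_nonneg (J 0 ⟨0, hm⟩ ⟨0, hm⟩); linarith
  -- clamped time
  set σ : ℝ → ℝ := fun s => max (-c) (min c s) with hσ
  have hσmem : ∀ s, σ s ∈ Set.Icc (-c) c :=
    fun s => ⟨le_max_left _ _, max_le (by linarith) (min_le_left _ _)⟩
  have hσeq : ∀ s ∈ Set.Ioo (-c) c, σ s = s := by
    intro s hs
    rw [hσ]; simp only
    rw [min_eq_right hs.2.le, max_eq_right hs.1.le]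
  set v : ℝ → (Fin m → Fin m → ℝ) → (Fin m → Fin m → ℝ) :=
    fun s B => fun i j => ∑ k, (J (σ s) i k * B k j + B i k * J (σ s) j k) with hv
  set K : NNReal := Real.toNNReal (2 * m * C) with hK
  have hKcoe : (K : ℝ) = 2 * m * C := Real.coe_toNNReal _ (by positivity)
  have hlin : ∀ s B₁ B₂, v s B₁ - v s B₂ = v s (B₁ - B₂) := by
    intro s B₁ B₂
    funext i j
    simp only [hv, Pi.sub_apply, ← Finset.sum_sub_distrib]
    exact Finset.sum_congr rfl fun k _ => by ring
  have hbound : ∀ s D, ‖v s D‖ ≤ K * ‖D‖ := by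
    intro s D
    rw [hKcoe]
    have hnn : (0:ℝ) ≤ 2 * m * C * ‖D‖ := by positivity
    rw [pi_norm_le_iff_of_nonneg hnn]
    intro i
    rw [pi_norm_le_iff_of_nonneg hnn]
    intro j
    have hDkj : ∀ k l : Fin m, |D k l| ≤ ‖D‖ := by
      intro k l
      calc |D k l| = ‖D k l‖ := (Real.norm_eq_abs _).symm
        _ ≤ ‖D k‖ := norm_le_pi_norm (D k) l
        _ ≤ ‖D‖ := norm_le_pi_norm D k
    calc ‖v s D i j‖ = |∑ k, (J (σ s) i k * D k j + D i k * J (σ s) j k)| := rfl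
      _ ≤ ∑ k, |J (σ s) i k * D k j + D i k * J (σ s) j k| := Finset.abs_sum_le_sum_abs _ _
      _ ≤ ∑ _k : Fin m, 2 * C * ‖D‖ := by
          refine Finset.sum_le_sum fun k _ => ?_
          have e1 := hentry _ (hσmem s) i k
          have e2 := hentry _ (hσmem s) j k
          calc |J (σ s) i k * D k j + D i k * J (σ s) j k|
              ≤ |J (σ s) i k * D k j| + |D i k * J (σ s) j k| := abs_add_le _ _
            _ = |J (σ s) i k| * |D k j| + |D i k| * |J (σ s) j k| := by rw [abs_mul, abs_mul]
            _ ≤ C * ‖D‖ + ‖D‖ * C := by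
                have := hDkj k j; have := hDkj i k
                have hD0 : (0:ℝ) ≤ ‖D‖ := norm_nonneg _
                nlinarith [abs_nonneg (J (σ s) i k), abs_nonneg (J (σ s) j k),
                  abs_nonneg (D k j), abs_nonneg (D i k)]
            _ = 2 * C * ‖D‖ := by ring
      _ = 2 * m * C * ‖D‖ := by
          rw [Finset.sum_const, Finset.card_univ, Fintype.card_fin, nsmul_eq_mul]; ring
  have hlip : ∀ s, LipschitzOnWith K (v s) Set.univ := by
    intro s
    rw [lipschitzOnWith_univ]
    refine LipschitzWith.of_dist_le_mul fun B₁ B₂ => ?_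
    rw [dist_eq_norm, dist_eq_norm, hlin]
    exact hbound s (B₁ - B₂)
  have hv0 : ∀ s, v s 0 = 0 := by
    intro s; funext i j; simp [hv]
  have huniq := ODE_solution_unique_of_mem_Ioo (v := v) (s := fun _ => Set.univ) (fun s _ => hlip s)
    h0mem (f := A) (g := fun _ => 0)
    (fun s hs => ⟨by rw [show v s (A s) = fun i j => ∑ k, (J s i k * A s k j + A s i k * J s j k)
        from by funext i j; rw [hv]; simp only [hσeq s hs]]; exact hA' s, Set.mem_univ _⟩)
    (fun s hs => ⟨by rw [hv0 s]; exact hasDerivAt_const s 0, Set.mem_univ _⟩)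
    (by simpa using hA0)
  simpa using huniq htmem


lemma rearr {m : ℕ} (U Pz J Pf : Fin m → Fin m → ℝ) (i j : Fin m) :
    (∑ k, ∑ l, ((∑ r, J i r * U r k) * Pz k l * U j l
        + U i k * Pz k l * (∑ r, J j r * U r l)))
      - ((∑ k, J i k * Pf k j) + ∑ k, Pf i k * J j k)
    = ∑ k, (J i k * ((∑ a, ∑ b, U k a * Pz a b * U j b) - Pf k j)
        + ((∑ a, ∑ b, U i a * Pz a b * U k b) - Pf i k) * J j k) := by
  classical
  have swap3 : ∀ (g : Fin m → Fin m → Fin m → ℝ),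
      (∑ k, ∑ l, ∑ r, g k l r) = ∑ r, ∑ k, ∑ l, g k l r := by
    intro g
    calc (∑ k, ∑ l, ∑ r, g k l r) = ∑ k, ∑ r, ∑ l, g k l r :=
          Finset.sum_congr rfl fun k _ => Finset.sum_comm
      _ = ∑ r, ∑ k, ∑ l, g k l r := Finset.sum_comm
  have hRHS : (∑ k, (J i k * ((∑ a, ∑ b, U k a * Pz a b * U j b) - Pf k j)
        + ((∑ a, ∑ b, U i a * Pz a b * U k b) - Pf i k) * J j k))
      = (∑ k, (J i k * (∑ a, ∑ b, U k a * Pz a b * U j b)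
          + (∑ a, ∑ b, U i a * Pz a b * U k b) * J j k))
        - ∑ k, (J i k * Pf k j + Pf i k * J j k) := by
    rw [← Finset.sum_sub_distrib]
    exact Finset.sum_congr rfl fun k _ => by ring
  rw [hRHS]
  have hPf : ((∑ k, J i k * Pf k j) + ∑ k, Pf i k * J j k)
      = ∑ k, (J i k * Pf k j + Pf i k * J j k) := Finset.sum_add_distrib.symm
  rw [hPf]
  have hmain : (∑ k, ∑ l, ((∑ r, J i r * U r k) * Pz k l * U j l
        + U i k * Pz k l * (∑ r, J j r * U r l)))
      = ∑ k, (J i k * (∑ a, ∑ b, U k a * Pz a b * U j b)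
          + (∑ a, ∑ b, U i a * Pz a b * U k b) * J j k) := by
    have hsplit : (∑ k, ∑ l, ((∑ r, J i r * U r k) * Pz k l * U j l
          + U i k * Pz k l * (∑ r, J j r * U r l)))
        = (∑ k, ∑ l, (∑ r, J i r * U r k) * Pz k l * U j l)
          + ∑ k, ∑ l, U i k * Pz k l * (∑ r, J j r * U r l) := by
      rw [← Finset.sum_add_distrib]
      exact Finset.sum_congr rfl fun k _ => Finset.sum_add_distrib
    rw [hsplit]
    have e1 : (∑ k, ∑ l, (∑ r, J i r * U r k) * Pz k l * U j l)
        = ∑ r, J i r * (∑ a, ∑ b, U r a * Pz a b * U j b) := by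
      calc (∑ k, ∑ l, (∑ r, J i r * U r k) * Pz k l * U j l)
          = ∑ k, ∑ l, ∑ r, J i r * (U r k * Pz k l * U j l) := by
            refine Finset.sum_congr rfl fun k _ => Finset.sum_congr rfl fun l _ => ?_
            rw [Finset.sum_mul, Finset.sum_mul]
            exact Finset.sum_congr rfl fun r _ => by ring
        _ = ∑ r, ∑ k, ∑ l, J i r * (U r k * Pz k l * U j l) := swap3 _
        _ = ∑ r, J i r * (∑ a, ∑ b, U r a * Pz a b * U j b) := by
            refine Finset.sum_congr rfl fun r _ => ?_
            rw [Finset.mul_sum]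
            exact Finset.sum_congr rfl fun a _ => (Finset.mul_sum _ _ _).symm
    have e2 : (∑ k, ∑ l, U i k * Pz k l * (∑ r, J j r * U r l))
        = ∑ r, (∑ a, ∑ b, U i a * Pz a b * U r b) * J j r := by
      calc (∑ k, ∑ l, U i k * Pz k l * (∑ r, J j r * U r l))
          = ∑ k, ∑ l, ∑ r, (U i k * Pz k l * U r l) * J j r := by
            refine Finset.sum_congr rfl fun k _ => Finset.sum_congr rfl fun l _ => ?_
            rw [Finset.mul_sum]
            exact Finset.sum_congr rfl fun r _ => by ring
        _ = ∑ r, ∑ k, ∑ l, (U i k * Pz k l * U r l) * J j r := swap3 _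
        _ = ∑ r, (∑ a, ∑ b, U i a * Pz a b * U r b) * J j r := by
            refine Finset.sum_congr rfl fun r _ => ?_
            rw [Finset.sum_mul]
            exact Finset.sum_congr rfl fun a _ => (Finset.sum_mul _ _ _).symm
    rw [e1, e2, ← Finset.sum_add_distrib]
  rw [hmain]


/-- The flow of a Hamiltonian system on a Poisson manifold `(ℝ^m, Π)` (with `Π` a `C¹`,
pointwise skew-symmetric structure matrix satisfying the coordinate Jacobi identity)
preserves the Poisson structure: `D_zΦ(t,z) Π(z) D_zΦ(t,z)ᵀ = Π(Φ(t,z))`. -/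
theorem hamiltonian_flow_is_poisson {m : ℕ}
    (P : (Fin m → ℝ) → Matrix (Fin m) (Fin m) ℝ)
    (hPC1 : ∀ i j, ContDiff ℝ 1 fun z => P z i j)
    (hskew : ∀ z, (P z)ᵀ = -(P z))
    (hjacobi : ∀ (i j k : Fin m) (z : Fin m → ℝ),
      ∑ l : Fin m, (P z i l * pd l (fun w => P w j k) z
        + P z k l * pd l (fun w => P w i j) z
        + P z j l * pd l (fun w => P w k i) z) = 0)
    (H : (Fin m → ℝ) → ℝ) (hH : ContDiff ℝ 2 H)
    (Φ : ℝ × (Fin m → ℝ) → (Fin m → ℝ)) (hΦ : ContDiff ℝ 2 Φ)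
    (hΦ₀ : ∀ z, Φ (0, z) = z)
    (hflow : ∀ (t : ℝ) (z : Fin m → ℝ),
      deriv (fun s => Φ (s, z)) t = P (Φ (t, z)) *ᵥ grad H (Φ (t, z)))
    (t : ℝ) (z : Fin m → ℝ) :
    jacobian (fun w => Φ (t, w)) z * P z * (jacobian (fun w => Φ (t, w)) z)ᵀ
      = P (Φ (t, z)) := by
  classical
  have hΦd : Differentiable ℝ Φ := hΦ.differentiable two_ne_zero
  have hgradC : ∀ i, ContDiff ℝ 1 fun w => grad H w i := fun i =>
    (hH.fderiv_right (by norm_num)).clm_apply contDiff_const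
  have hfC : ∀ i, ContDiff ℝ 1 fun w => (P w *ᵥ grad H w) i := by
    intro i
    have hfun : (fun w => (P w *ᵥ grad H w) i) = fun w => ∑ k, P w i k * grad H w k := by
      funext w; simp [Matrix.mulVec, dotProduct]
    rw [hfun]
    exact ContDiff.sum fun k _ => (hPC1 i k).mul (hgradC k)
  -- the time derivative of Φ as a full Fréchet derivative
  have key1 : ∀ p : ℝ × (Fin m → ℝ), fderiv ℝ Φ p (1, 0) = P (Φ p) *ᵥ grad H (Φ p) := by
    rintro ⟨s, w⟩
    have hline : HasDerivAt (fun τ : ℝ => (τ, w)) ((1 : ℝ), (0 : Fin m → ℝ)) s :=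
      HasDerivAt.prodMk (hasDerivAt_id s) (hasDerivAt_const s w)
    have h : HasDerivAt (fun τ => Φ (τ, w)) (fderiv ℝ Φ (s, w) (1, 0)) s :=
      ((hΦd (s, w)).hasFDerivAt).comp_hasDerivAt s hline
    have h2 := h.deriv
    rw [hflow s w] at h2
    exact h2.symm
  -- the flow lines solve the ODE
  have hφt : ∀ (w : Fin m → ℝ) (s : ℝ),
      HasDerivAt (fun τ => Φ (τ, w)) (P (Φ (s, w)) *ᵥ grad H (Φ (s, w))) s := by
    intro w s
    have hline : HasDerivAt (fun τ : ℝ => (τ, w)) ((1 : ℝ), (0 : Fin m → ℝ)) s :=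
      HasDerivAt.prodMk (hasDerivAt_id s) (hasDerivAt_const s w)
    have h : HasDerivAt (fun τ => Φ (τ, w)) (fderiv ℝ Φ (s, w) (1, 0)) s :=
      ((hΦd (s, w)).hasFDerivAt).comp_hasDerivAt s hline
    rwa [key1 (s, w)] at h
  -- the space derivative of Φ as a full Fréchet derivative
  have key2 : ∀ (s : ℝ) (w v : Fin m → ℝ),
      fderiv ℝ (fun u => Φ (s, u)) w v = fderiv ℝ Φ (s, w) (0, v) := by
    intro s w v
    have hincl : HasFDerivAt (fun u : Fin m → ℝ => (s, u))
        (ContinuousLinearMap.inr ℝ ℝ (Fin m → ℝ)) w := hasFDerivAt_prodMk_right s w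
    have h : HasFDerivAt (fun u => Φ (s, u))
        ((fderiv ℝ Φ (s, w)).comp (ContinuousLinearMap.inr ℝ ℝ (Fin m → ℝ))) w :=
      ((hΦd (s, w)).hasFDerivAt).comp w hincl
    rw [h.fderiv]
    rfl
  -- time derivative of the Jacobian entries
  have hU' : ∀ (s : ℝ) (i j : Fin m),
      HasDerivAt (fun τ => fderiv ℝ Φ (τ, z) ((0 : ℝ), (Pi.single j 1 : Fin m → ℝ)) i)
        (∑ k, pd k (fun u => (P u *ᵥ grad H u) i) (Φ (s, z))
          * fderiv ℝ Φ (s, z) ((0 : ℝ), (Pi.single j 1 : Fin m → ℝ)) k) s := by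
    intro s i j
    classical
    have hΦd : Differentiable ℝ Φ := hΦ.differentiable two_ne_zero
    have hFC : ContDiff ℝ 1 (fderiv ℝ Φ) := hΦ.fderiv_right (by norm_num)
    set G : ℝ × (Fin m → ℝ) → ℝ := fun p => fderiv ℝ Φ p ((0 : ℝ), (Pi.single j 1 : Fin m → ℝ)) i with hGdef
    have hGC : ContDiff ℝ 1 G := by
      have h1 : ContDiff ℝ 1 fun p => fderiv ℝ Φ p ((0 : ℝ), (Pi.single j 1 : Fin m → ℝ)) :=
        hFC.clm_apply contDiff_const
      exact (contDiff_pi.mp h1) i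
    -- Step A : the derivative exists and equals fderiv G (s,z) (1,0)
    have hline : HasDerivAt (fun τ : ℝ => (τ, z)) ((1 : ℝ), (0 : Fin m → ℝ)) s :=
      HasDerivAt.prodMk (hasDerivAt_id s) (hasDerivAt_const s z)
    have hA : HasDerivAt (fun τ => G (τ, z)) (fderiv ℝ G (s, z) ((1:ℝ), (0 : Fin m → ℝ))) s :=
      by have h := ((hGC.differentiable one_ne_zero (s, z)).hasFDerivAt).comp_hasDerivAt s hline; exact h
    -- Step B : fderiv G (s,z) (1,0) = (fderiv F (s,z) (1,0)) (0, e j) i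
    have hB : fderiv ℝ G (s, z) ((1:ℝ), (0 : Fin m → ℝ))
        = fderiv ℝ (fderiv ℝ Φ) (s, z) ((1:ℝ), (0 : Fin m → ℝ)) ((0 : ℝ), (Pi.single j 1 : Fin m → ℝ)) i := by
      have hclm : HasFDerivAt (fun p => fderiv ℝ Φ p ((0 : ℝ), (Pi.single j 1 : Fin m → ℝ)))
          ((fderiv ℝ Φ (s, z)).comp (0 : ℝ × (Fin m → ℝ) →L[ℝ] ℝ × (Fin m → ℝ))
            + (fderiv ℝ (fderiv ℝ Φ) (s, z)).flip ((0 : ℝ), (Pi.single j 1 : Fin m → ℝ))) (s, z) :=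
        ((hFC.differentiable one_ne_zero (s, z)).hasFDerivAt).clm_apply
          (hasFDerivAt_const _ (s, z))
      have hGder : HasFDerivAt G
          ((ContinuousLinearMap.proj i).comp
            ((fderiv ℝ Φ (s, z)).comp (0 : ℝ × (Fin m → ℝ) →L[ℝ] ℝ × (Fin m → ℝ))
              + (fderiv ℝ (fderiv ℝ Φ) (s, z)).flip ((0 : ℝ), (Pi.single j 1 : Fin m → ℝ)))) (s, z) :=
        by have h := (hasFDerivAt_apply (𝕜 := ℝ) i (fderiv ℝ Φ (s, z) ((0 : ℝ), (Pi.single j 1 : Fin m → ℝ)))).comp (s, z) hclm; exact h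
      rw [hGder.fderiv]
      simp
    -- Step C : symmetry of the second derivative
    have hC : fderiv ℝ (fderiv ℝ Φ) (s, z) ((1:ℝ), (0 : Fin m → ℝ)) ((0 : ℝ), (Pi.single j 1 : Fin m → ℝ))
        = fderiv ℝ (fderiv ℝ Φ) (s, z) ((0 : ℝ), (Pi.single j 1 : Fin m → ℝ)) ((1:ℝ), (0 : Fin m → ℝ)) :=
      (hΦ.contDiffAt.isSymmSndFDerivAt (by simp)) _ _
    -- Step D : exchange application and differentiation for the (1,0) slot
    have hD : ∀ (v : ℝ × (Fin m → ℝ)),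
        fderiv ℝ (fderiv ℝ Φ) (s, z) v ((1:ℝ), (0 : Fin m → ℝ)) i
          = fderiv ℝ (fun p => fderiv ℝ Φ p ((1:ℝ), (0 : Fin m → ℝ)) i) (s, z) v := by
      intro v
      have hclm : HasFDerivAt (fun p => fderiv ℝ Φ p ((1:ℝ), (0 : Fin m → ℝ)))
          ((fderiv ℝ Φ (s, z)).comp (0 : ℝ × (Fin m → ℝ) →L[ℝ] ℝ × (Fin m → ℝ))
            + (fderiv ℝ (fderiv ℝ Φ) (s, z)).flip ((1:ℝ), (0 : Fin m → ℝ))) (s, z) :=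
        ((hFC.differentiable one_ne_zero (s, z)).hasFDerivAt).clm_apply
          (hasFDerivAt_const _ (s, z))
      have hGder : HasFDerivAt (fun p => fderiv ℝ Φ p ((1:ℝ), (0 : Fin m → ℝ)) i)
          ((ContinuousLinearMap.proj i).comp
            ((fderiv ℝ Φ (s, z)).comp (0 : ℝ × (Fin m → ℝ) →L[ℝ] ℝ × (Fin m → ℝ))
              + (fderiv ℝ (fderiv ℝ Φ) (s, z)).flip ((1:ℝ), (0 : Fin m → ℝ)))) (s, z) :=
        by have h := (hasFDerivAt_apply (𝕜 := ℝ) i (fderiv ℝ Φ (s, z) ((1:ℝ), (0 : Fin m → ℝ)))).comp (s, z) hclm; exact h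
      rw [hGder.fderiv]
      simp
    -- Step E : fderiv ℝ Φ p (1,0) = f (Φ p)
    have hE : (fun p => fderiv ℝ Φ p ((1:ℝ), (0 : Fin m → ℝ)) i) = fun p => (P (Φ p) *ᵥ grad H (Φ p)) i := by
      funext p
      rw [key1 p]
    -- Step F+G : chain rule
    have hFG : fderiv ℝ (fun p => (P (Φ p) *ᵥ grad H (Φ p)) i) (s, z) ((0 : ℝ), (Pi.single j 1 : Fin m → ℝ))
        = ∑ k, pd k (fun u => (P u *ᵥ grad H u) i) (Φ (s, z))
            * fderiv ℝ Φ (s, z) ((0 : ℝ), (Pi.single j 1 : Fin m → ℝ)) k := by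
      have hcomp : HasFDerivAt (fun p => (P (Φ p) *ᵥ grad H (Φ p)) i)
          ((fderiv ℝ (fun u => (P u *ᵥ grad H u) i) (Φ (s, z))).comp (fderiv ℝ Φ (s, z))) (s, z) :=
        (((hfC i).differentiable one_ne_zero (Φ (s, z))).hasFDerivAt).comp (s, z)
          (hΦd (s, z)).hasFDerivAt
      rw [hcomp.fderiv]
      rw [ContinuousLinearMap.comp_apply]
      rw [fderiv_eq_sum_pd]
      exact Finset.sum_congr rfl fun k _ => by rw [mul_comm]
    have hval : fderiv ℝ G (s, z) ((1:ℝ), (0 : Fin m → ℝ))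
        = ∑ k, pd k (fun u => (P u *ᵥ grad H u) i) (Φ (s, z))
            * fderiv ℝ Φ (s, z) ((0 : ℝ), (Pi.single j 1 : Fin m → ℝ)) k := by
      calc fderiv ℝ G (s, z) ((1:ℝ), (0 : Fin m → ℝ))
          = fderiv ℝ (fderiv ℝ Φ) (s, z) ((1:ℝ), (0 : Fin m → ℝ)) ((0 : ℝ), (Pi.single j 1 : Fin m → ℝ)) i := hB
        _ = fderiv ℝ (fderiv ℝ Φ) (s, z) ((0 : ℝ), (Pi.single j 1 : Fin m → ℝ)) ((1:ℝ), (0 : Fin m → ℝ)) i :=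
            congrFun hC i
        _ = fderiv ℝ (fun p => fderiv ℝ Φ p ((1:ℝ), (0 : Fin m → ℝ)) i) (s, z)
              ((0 : ℝ), (Pi.single j 1 : Fin m → ℝ)) := hD _
        _ = fderiv ℝ (fun p => (P (Φ p) *ᵥ grad H (Φ p)) i) (s, z) ((0 : ℝ), (Pi.single j 1 : Fin m → ℝ)) := by
            rw [hE]
        _ = ∑ k, pd k (fun u => (P u *ᵥ grad H u) i) (Φ (s, z))
              * fderiv ℝ Φ (s, z) ((0 : ℝ), (Pi.single j 1 : Fin m → ℝ)) k := hFG
    rw [← hval]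
    exact hA
  -- time derivative of P along the flow
  have hP' : ∀ (s : ℝ) (a b : Fin m),
      HasDerivAt (fun τ => P (Φ (τ, z)) a b)
        (∑ l, (P (Φ (s, z)) *ᵥ grad H (Φ (s, z))) l
          * pd l (fun u => P u a b) (Φ (s, z))) s :=
    fun s a b => hasDerivAt_comp_sum_pd (hPC1 a b) (hφt z s)
  -- the matrix A
  set A : ℝ → Fin m → Fin m → ℝ := fun s a b =>
    (∑ k, ∑ l, fderiv ℝ Φ (s, z) ((0 : ℝ), (Pi.single k 1 : Fin m → ℝ)) a * P z k l
        * fderiv ℝ Φ (s, z) ((0 : ℝ), (Pi.single l 1 : Fin m → ℝ)) b)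
      - P (Φ (s, z)) a b with hAdef
  set J : ℝ → Fin m → Fin m → ℝ := fun s a k =>
    pd k (fun u => (P u *ᵥ grad H u) a) (Φ (s, z)) with hJdef
  have hA' : ∀ s : ℝ,
      HasDerivAt A (fun a b => ∑ k, (J s a k * A s k b + A s a k * J s b k)) s := by
    intro s
    rw [hasDerivAt_pi]
    intro a
    rw [hasDerivAt_pi]
    intro b
    have h1 : HasDerivAt (fun τ => ∑ k, ∑ l,
          fderiv ℝ Φ (τ, z) ((0 : ℝ), (Pi.single k 1 : Fin m → ℝ)) a * P z k l
            * fderiv ℝ Φ (τ, z) ((0 : ℝ), (Pi.single l 1 : Fin m → ℝ)) b)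
        (∑ k, ∑ l,
          ((∑ r, J s a r * fderiv ℝ Φ (s, z) ((0 : ℝ), (Pi.single k 1 : Fin m → ℝ)) r)
              * P z k l * fderiv ℝ Φ (s, z) ((0 : ℝ), (Pi.single l 1 : Fin m → ℝ)) b
            + fderiv ℝ Φ (s, z) ((0 : ℝ), (Pi.single k 1 : Fin m → ℝ)) a * P z k l
              * (∑ r, J s b r
                  * fderiv ℝ Φ (s, z) ((0 : ℝ), (Pi.single l 1 : Fin m → ℝ)) r))) s := by
      refine HasDerivAt.fun_sum fun k _ => HasDerivAt.fun_sum fun l _ => ?_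
      exact ((hU' s a k).mul_const (P z k l)).mul (hU' s b l)
    have h3 := h1.sub (hP' s a b)
    have hval : (∑ k, ∑ l,
          ((∑ r, J s a r * fderiv ℝ Φ (s, z) ((0 : ℝ), (Pi.single k 1 : Fin m → ℝ)) r)
              * P z k l * fderiv ℝ Φ (s, z) ((0 : ℝ), (Pi.single l 1 : Fin m → ℝ)) b
            + fderiv ℝ Φ (s, z) ((0 : ℝ), (Pi.single k 1 : Fin m → ℝ)) a * P z k l
              * (∑ r, J s b r
                  * fderiv ℝ Φ (s, z) ((0 : ℝ), (Pi.single l 1 : Fin m → ℝ)) r)))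
        - (∑ l, (P (Φ (s, z)) *ᵥ grad H (Φ (s, z))) l
            * pd l (fun u => P u a b) (Φ (s, z)))
        = ∑ k, (J s a k * A s k b + A s a k * J s b k) := by
      rw [key_alg P hPC1 hskew hjacobi H hH hgradC (Φ (s, z)) a b]
      exact rearr (fun p q => fderiv ℝ Φ (s, z) ((0 : ℝ), (Pi.single q 1 : Fin m → ℝ)) p)
        (fun p q => P z p q) (fun p q => J s p q) (fun p q => P (Φ (s, z)) p q) a b
    rw [hval] at h3
    exact h3
  -- continuity of the coefficients
  have hJcont : ∀ i k, Continuous fun s => J s i k := by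
    intro i k
    have h1 : Continuous (fderiv ℝ fun u => (P u *ᵥ grad H u) i) :=
      (hfC i).continuous_fderiv one_ne_zero
    have h2 : Continuous fun w => fderiv ℝ (fun u => (P u *ᵥ grad H u) i) w
        (Pi.single k 1 : Fin m → ℝ) :=
      ((ContinuousLinearMap.apply ℝ ℝ ((Pi.single k 1 : Fin m → ℝ))).continuous).comp h1
    have h3 : Continuous fun s : ℝ => Φ (s, z) :=
      hΦ.continuous.comp (continuous_id.prodMk continuous_const)
    exact h2.comp h3
  -- initial condition
  have hA0 : A 0 = 0 := by
    funext a b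
    have hid : (fun u => Φ (0, u)) = id := funext hΦ₀
    have hUent : ∀ p q : Fin m,
        fderiv ℝ Φ (0, z) ((0 : ℝ), (Pi.single q 1 : Fin m → ℝ)) p
          = (Pi.single q 1 : Fin m → ℝ) p := by
      intro p q
      rw [← key2 0 z (Pi.single q 1), hid, fderiv_id]
      rfl
    rw [hAdef]
    simp only [hUent, hΦ₀ z, Pi.zero_apply]
    rw [sub_eq_zero]
    have : ∀ k l : Fin m, (Pi.single k 1 : Fin m → ℝ) a * P z k l
        * (Pi.single l 1 : Fin m → ℝ) b
        = (if a = k then 1 else 0) * P z k l * (if b = l then 1 else 0) := by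
      intro k l
      rw [Pi.single_apply, Pi.single_apply]
    simp only [this, ite_mul, one_mul, zero_mul, mul_ite, mul_one, mul_zero]
    rw [Finset.sum_eq_single a]
    · rw [Finset.sum_eq_single b] <;> simp +contextual [eq_comm]
    · intro k _ hk
      simp [Ne.symm hk]
    · simp
  -- apply uniqueness
  have hz := ode_matrix_zero J hJcont A hA' hA0 t
  -- conclude
  ext i j
  have hij := congrFun (congrFun hz i) j
  rw [hAdef] at hij
  simp only [Pi.zero_apply, sub_eq_zero] at hij
  have hjac : ∀ p q : Fin m, jacobian (fun w => Φ (t, w)) z p q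
      = fderiv ℝ Φ (t, z) ((0 : ℝ), (Pi.single q 1 : Fin m → ℝ)) p := by
    intro p q
    rw [jacobian, Matrix.of_apply, key2 t z (Pi.single q 1)]
  rw [Matrix.mul_apply]
  calc (∑ k, (jacobian (fun w => Φ (t, w)) z * P z) i k
        * (jacobian (fun w => Φ (t, w)) z)ᵀ k j)
      = ∑ l, ∑ k, fderiv ℝ Φ (t, z) ((0 : ℝ), (Pi.single k 1 : Fin m → ℝ)) i * P z k l
          * fderiv ℝ Φ (t, z) ((0 : ℝ), (Pi.single l 1 : Fin m → ℝ)) j := by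
        refine Finset.sum_congr rfl fun l _ => ?_
        rw [Matrix.mul_apply, Matrix.transpose_apply, Finset.sum_mul]
        exact Finset.sum_congr rfl fun k _ => by rw [hjac, hjac]
    _ = ∑ k, ∑ l, fderiv ℝ Φ (t, z) ((0 : ℝ), (Pi.single k 1 : Fin m → ℝ)) i * P z k l
          * fderiv ℝ Φ (t, z) ((0 : ℝ), (Pi.single l 1 : Fin m → ℝ)) j := Finset.sum_comm
    _ = P (Φ (t, z)) i j := hij
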